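/- Fix a real u ≥ 1 and an integer m ≥ 1. If there exists a sequence x : ℕ → ℝ with x(0) = 1, x(i) ≥ 0 for all 1 ≤ i ≤ m, x(m) = u, and ∑_{j=1}^{i} x(j) ≤ w·x(i−1) for every 1 ≤ i ≤ m, then a(m−1)·u ≤ w. -/

import Mathlib

/-- The sequence `b` with `b 0 = 0` and `b i = (1 + b (i-1)) / (w - 1 - b (i-1))`. -/
noncomputable def bseq (w : ℝ) : ℕ → ℝ
  | 0 => 0
  | i + 1 => (1 + bseq w i) / (w - 1 - bseq w i)

/-- The sequence `a` with `a 0 = 1` and `a i = a (i-1) / (w - 1 - b (i-1))`. -/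
noncomputable def aseq (w : ℝ) : ℕ → ℝ
  | 0 => 1
  | i + 1 => aseq w i / (w - 1 - bseq w i)

/-- The sequence `d` with `d 0 = 1` and `d i = d (i-1) * (1 + b (i-1))`. -/
noncomputable def dseq (w : ℝ) : ℕ → ℝ
  | 0 => 1
  | i + 1 => dseq w i * (1 + bseq w i)

/-- The sequence `c` with `c 0 = 0` and `c i = c (i-1) + d (i-1) * a (i-1)`. -/
noncomputable def cseq (w : ℝ) : ℕ → ℝ
  | 0 => 0
  | i + 1 => cseq w i + dseq w i * aseq w i

lemma bseq_bounds (w : ℝ) (hw : 4 ≤ w) : ∀ i, 0 ≤ bseq w i ∧ bseq w i < 1 := by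
  intro i
  induction i with
  | zero => simp [bseq]
  | succ n ih =>
    obtain ⟨h0, h1⟩ := ih
    have hd : 0 < w - 1 - bseq w n := by linarith
    constructor
    · exact div_nonneg (by linarith) hd.le
    · rw [show bseq w (n+1) = (1 + bseq w n) / (w - 1 - bseq w n) from rfl,
        div_lt_one hd]
      linarith

lemma bseq_denom_pos (w : ℝ) (hw : 4 ≤ w) (i : ℕ) : 0 < w - 1 - bseq w i := by
  obtain ⟨h0, h1⟩ := bseq_bounds w hw i
  linarith

lemma bseq_key (w : ℝ) (hw : 4 ≤ w) (k : ℕ) :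
    (1 + bseq w (k + 1)) * (w - 1 - bseq w k) = w := by
  have hd := bseq_denom_pos w hw k
  rw [show bseq w (k+1) = (1 + bseq w k) / (w - 1 - bseq w k) from rfl]
  field_simp
  ring

/-- if the linear program `L_{m,u}` is feasible then `a (m-1) * u ≤ w`. -/
theorem bidding_LP_feasibility (w : ℝ) (hw : 4 ≤ w) (u : ℝ) (hu : 1 ≤ u)
    (m : ℕ) (hm : 1 ≤ m)
    (hfeas : ∃ x : ℕ → ℝ, x 0 = 1 ∧ (∀ i : ℕ, 1 ≤ i → i ≤ m → 0 ≤ x i) ∧ x m = u ∧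
      (∀ i : ℕ, 1 ≤ i → i ≤ m → ∑ j ∈ Finset.Icc 1 i, x j ≤ w * x (i - 1))) :
    aseq w (m - 1) * u ≤ w := by
  obtain ⟨x, hx0, hxnn, hxm, hcon⟩ := hfeas
  have claim : ∀ k, k < m → aseq w k * u ≤
      w * x (m - 1 - k) - (1 + bseq w k) * ∑ j ∈ Finset.Icc 1 (m - 1 - k), x j := by
    intro k
    induction k with
    | zero =>
      intro _
      have hc := hcon m hm le_rfl
      have hsum : ∑ j ∈ Finset.Icc 1 m, x j
          = (∑ j ∈ Finset.Icc 1 (m - 1), x j) + x m := by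
        have hm' : m = (m - 1) + 1 := by omega
        rw [hm', Finset.sum_Icc_succ_top (by omega)]
        rw [← hm']
      rw [hsum, hxm] at hc
      simp only [aseq, bseq, Nat.sub_zero, one_mul, one_mul]
      linarith
    | succ k ih =>
      intro hk
      have hik := ih (by omega)
      have hi1 : m - 1 - k = (m - 1 - (k + 1)) + 1 := by omega
      set i := m - 1 - (k + 1) with hidef
      rw [hi1] at hik
      have hc := hcon (i + 1) (by omega) (by omega)
      simp only [Nat.add_sub_cancel] at hc
      set S := ∑ j ∈ Finset.Icc 1 i, x j with hS
      have hsum : ∑ j ∈ Finset.Icc 1 (i + 1), x j = S + x (i + 1) := by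
        rw [Finset.sum_Icc_succ_top (by omega)]
      rw [hsum] at hik hc
      have hd := bseq_denom_pos w hw k
      have hkey := bseq_key w hw k
      have h2 : (w - 1 - bseq w k) * x (i + 1)
          ≤ (w - 1 - bseq w k) * (w * x i - S) :=
        mul_le_mul_of_nonneg_left (by linarith) hd.le
      have expand : (w * x i - (1 + bseq w (k + 1)) * S) * (w - 1 - bseq w k)
          = w * x i * (w - 1 - bseq w k) - w * S := by
        linear_combination (-S) * hkey
      rw [show aseq w (k + 1) = aseq w k / (w - 1 - bseq w k) from rfl,
        div_mul_eq_mul_div, div_le_iff₀ hd]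
      nlinarith [hik, h2, expand]
  have hfin := claim (m - 1) (by omega)
  rw [show m - 1 - (m - 1) = 0 from by omega] at hfin
  simp only [hx0, Finset.Icc_self] at hfin
  simp at hfin
  linarith
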